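/- Let g, h be transcendental entire functions and f : ℂ → ℂ a continuous open map with f ∘ g = h ∘ f. If there exist a nonconstant polynomial P and an entire function K such that P ∘ g = K ∘ f on ℂ, and V is a Baker domain of g (a periodic Fatou component on which the iterates of g tend to infinity), then f(V) is contained in the Fatou set of h. -/

import Mathlib

open Filter Topology Set Metric Bornology

noncomputable section

/-- The family `F n` tends to `∞` locally uniformly on `U`. -/
def TendstoUniformlyInftyOn (F : ℕ → ℂ → ℂ) (U : Set ℂ) : Prop :=
  ∀ K : Set ℂ, K ⊆ U → IsCompact K → ∀ M : ℝ, ∀ᶠ n in atTop, ∀ z ∈ K, M < ‖F n z‖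

/-- Normality of a sequence of functions on an open set: every subsequence has a further
subsequence converging locally uniformly to a finite limit or diverging locally uniformly to ∞. -/
def IsNormalOn (F : ℕ → ℂ → ℂ) (U : Set ℂ) : Prop :=
  ∀ s : ℕ → ℕ, StrictMono s →
    ∃ t : ℕ → ℕ, StrictMono t ∧
      ((∃ G : ℂ → ℂ, TendstoLocallyUniformlyOn (fun n => F (s (t n))) G atTop U) ∨
        TendstoUniformlyInftyOn (fun n => F (s (t n))) U)

/-- Fatou set: points with a neighborhood on which the iterates form a normal family. -/
def FatouSet (f : ℂ → ℂ) : Set ℂ :=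
  {z | ∃ U : Set ℂ, IsOpen U ∧ z ∈ U ∧ IsNormalOn (fun n => f^[n]) U}

/-- Julia set: complement of the Fatou set. -/
def JuliaSet (f : ℂ → ℂ) : Set ℂ := (FatouSet f)ᶜ

/-- Transcendental entire function: entire and not a polynomial. -/
def TranscendentalEntire (f : ℂ → ℂ) : Prop :=
  Differentiable ℂ f ∧ ¬∃ p : Polynomial ℂ, ∀ z, f z = p.eval z

/-- Fatou exceptional value: a point with finite backward orbit. -/
def FatouExceptional (f : ℂ → ℂ) (w : ℂ) : Prop :=
  {z : ℂ | ∃ n : ℕ, f^[n] z = w}.Finite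

/-- `w` is an asymptotic value of `f`. -/
def AsymptoticValue (f : ℂ → ℂ) (w : ℂ) : Prop :=
  ∃ Γ : ℝ → ℂ, Continuous Γ ∧ Tendsto (fun t => ‖Γ t‖) atTop atTop ∧
    Tendsto (fun t => f (Γ t)) atTop (𝓝 w)

/-- The set of asymptotic values of `f`. -/
def AV (f : ℂ → ℂ) : Set ℂ := {w | AsymptoticValue f w}

/-- Maximum modulus of `f` on the closed ball of radius `r`. -/
def maxMod (f : ℂ → ℂ) (r : ℝ) : ℝ :=
  sSup ((fun z => ‖f z‖) '' Metric.closedBall (0 : ℂ) r)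

/-- The order of an entire function, as an extended real number. -/
def entireOrder (f : ℂ → ℂ) : EReal :=
  limsup (fun r : ℝ => ((Real.log (Real.log (maxMod f r)) / Real.log r : ℝ) : EReal)) atTop

/-- `V` is a connected component of the Fatou set of `f`. -/
def IsFatouComponent (f : ℂ → ℂ) (V : Set ℂ) : Prop :=
  ∃ z ∈ FatouSet f, V = connectedComponentIn (FatouSet f) z
/-- Baker domain: an invariant Fatou component on which the iterates tend to ∞
locally uniformly. -/
def IsBakerDomain (g : ℂ → ℂ) (V : Set ℂ) : Prop :=
  IsFatouComponent g V ∧ (∀ z ∈ V, g z ∈ V) ∧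
    TendstoUniformlyInftyOn (fun n => g^[n]) V


lemma fatou_open (f : ℂ → ℂ) : IsOpen (FatouSet f) := by
  rw [isOpen_iff_mem_nhds]
  rintro z ⟨U, hU, hzU, hN⟩
  exact Filter.mem_of_superset (hU.mem_nhds hzU) (fun u hu => ⟨U, hU, hu, hN⟩)

lemma compact_cover {V : Set ℂ} (hVo : IsOpen V) {f : ℂ → ℂ} (hfo : IsOpenMap f)
    {L : Set ℂ} (hL : L ⊆ f '' V) (hLc : IsCompact L) :
    ∃ L' : Set ℂ, IsCompact L' ∧ L' ⊆ V ∧ L ⊆ f '' L' := by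
  have key : ∀ w : L, ∃ z : ℂ, ∃ r : ℝ, 0 < r ∧ closedBall z r ⊆ V ∧ f z = w := by
    rintro ⟨w, hw⟩
    obtain ⟨z, hzV, hfz⟩ := hL hw
    obtain ⟨r, hr, hball⟩ := (Metric.isOpen_iff.mp hVo) z hzV
    exact ⟨z, r/2, by linarith, (closedBall_subset_ball (by linarith)).trans hball, hfz⟩
  choose z r hr hball hfz using key
  have hcov : L ⊆ ⋃ w : L, f '' ball (z w) (r w) := fun w hw =>
    mem_iUnion.mpr ⟨⟨w, hw⟩, ⟨z ⟨w, hw⟩, mem_ball_self (hr _), hfz _⟩⟩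
  obtain ⟨s, hs⟩ := hLc.elim_finite_subcover (fun w : L => f '' ball (z w) (r w))
    (fun w => hfo _ isOpen_ball) hcov
  refine ⟨⋃ w ∈ s, closedBall (z w) (r w), ?_, ?_, ?_⟩
  · exact s.isCompact_biUnion (fun w _ => isCompact_closedBall _ _)
  · exact iUnion₂_subset (fun w _ => hball w)
  · intro x hx
    obtain ⟨w, hws, hmem⟩ := mem_iUnion₂.mp (hs hx)
    obtain ⟨y, hy, hfy⟩ := hmem
    exact ⟨y, mem_biUnion hws (ball_subset_closedBall hy), hfy⟩

theorem stmt_2 (g h : ℂ → ℂ) (hg : TranscendentalEntire g) (hh : TranscendentalEntire h)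
    (f : ℂ → ℂ) (hfc : Continuous f) (hfo : IsOpenMap f) (hsemi : f ∘ g = h ∘ f)
    (P : Polynomial ℂ) (hP : 0 < P.degree) (K : ℂ → ℂ) (hK : Differentiable ℂ K)
    (hPK : ∀ z : ℂ, P.eval (g z) = K (f z))
    (V : Set ℂ) (hV : IsBakerDomain g V) :
    f '' V ⊆ FatouSet h := by
  -- V is open
  obtain ⟨⟨z1, hz1, hVeq⟩, hinv, hVinf⟩ := hV
  have hVo : IsOpen V := hVeq ▸ (fatou_open g).connectedComponentIn
  -- semiconjugacy for iterates
  have hsc : Function.Semiconj f g h := fun x => congrFun hsemi x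
  have hit : ∀ (n : ℕ) (x : ℂ), f (g^[n] x) = h^[n] (f x) := fun n x =>
    (hsc.iterate_right n) x
  -- key: h^[n] → ∞ uniformly on compacts of f '' V
  have main : TendstoUniformlyInftyOn (fun n => h^[n]) (f '' V) := by
    intro L hL hLc M
    obtain ⟨L', hL'c, hL'V, hLsub⟩ := compact_cover hVo hfo hL hLc
    -- bound of K on closedBall 0 |M|
    obtain ⟨C, hC⟩ : ∃ C : ℝ, ∀ y ∈ closedBall (0 : ℂ) |M|, ‖K y‖ ≤ C := by
      obtain ⟨C, hC⟩ := (isCompact_closedBall (0 : ℂ) |M|).exists_bound_of_continuousOn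
        ((continuous_norm.comp hK.continuous).continuousOn)
      refine ⟨C, fun y hy => ?_⟩
      have := hC y hy
      rwa [Real.norm_eq_abs, Function.comp_apply,
        abs_of_nonneg (norm_nonneg _)] at this
    -- choose R with |ζ| ≥ R → C < |P ζ|
    have hPt : Tendsto (fun x : ℂ => ‖P.eval x‖) (comap norm atTop) atTop :=
      P.tendsto_norm_atTop hP tendsto_comap
    have hev : ∀ᶠ x : ℂ in comap norm atTop, C < ‖P.eval x‖ :=
      hPt.eventually (eventually_gt_atTop C)
    obtain ⟨R, -, hR⟩ := ((atTop_basis.comap (norm : ℂ → ℝ)).eventually_iff).mp hev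
    -- iterates of g escape uniformly on L'
    obtain ⟨N, hN⟩ := eventually_atTop.mp (hVinf L' hL'V hL'c R)
    refine eventually_atTop.mpr ⟨N, fun n hn w hw => ?_⟩
    obtain ⟨x, hxL', hfx⟩ := hLsub hw
    -- |g^[n+1] x| > R
    have h1 : R < ‖g^[n+1] x‖ := hN (n+1) (by omega) x hxL'
    have h2 : C < ‖P.eval (g^[n+1] x)‖ := hR (le_of_lt h1)
    -- K (h^[n] w) = P (g^[n+1] x)
    have h3 : K (h^[n] w) = P.eval (g^[n+1] x) := by
      rw [← hfx, ← hit n x, ← hPK, Function.iterate_succ_apply']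
    by_contra hcon
    push_neg at hcon
    have : h^[n] w ∈ closedBall (0 : ℂ) |M| := by
      simp only [mem_closedBall, dist_zero_right]
      exact le_trans (by exact_mod_cast hcon.trans (le_abs_self M)) le_rfl
    have := hC _ this
    rw [h3] at this
    exact absurd h2 (not_lt.mpr this)
  -- conclude
  intro w hw
  refine ⟨f '' V, hfo V hVo, hw, ?_⟩
  intro s hs
  refine ⟨id, strictMono_id, Or.inr ?_⟩
  intro L hL hLc M
  obtain ⟨N, hN⟩ := eventually_atTop.mp (main L hL hLc M)
  exact eventually_atTop.mpr ⟨N, fun n hn => hN (s n) (le_trans (le_trans hn hs.le_apply) le_rfl)⟩
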